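/- Let S = K[x_1,...,x_n] be a polynomial ring over a field K and I an ideal generated by squarefree quadratic monomials, with x_i^2 ∉ I and x_j^2 ∉ I for some i < j. Then the image of x_i + x_j is a zero-divisor in S/I if and only if either (i) there exists k ∉ {i,j} with x_k x_i ∈ I and x_k x_j ∈ I, or (ii) there exist k < l, both distinct from i and j, with x_k x_l ∉ I, x_k x_l x_i ∈ I and x_k x_l x_j ∈ I. -/

import Mathlib

open SimpleGraph MvPolynomial

variable {V : Type*}

/-- `s` is an independent set of the graph `G`. -/
def IsIndep (G : SimpleGraph V) (s : Set V) : Prop :=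
  s.Pairwise fun a b => ¬ G.Adj a b

/-- `s` is a maximal independent set of the graph `G`. -/
def IsMaxIndep (G : SimpleGraph V) (s : Set V) : Prop :=
  IsIndep G s ∧ ∀ t : Set V, IsIndep G t → s ⊆ t → s = t

/-- `G` is unmixed: all maximal independent sets have the same cardinality. -/
def Unmixed (G : SimpleGraph V) : Prop :=
  ∀ s t : Set V, IsMaxIndep G s → IsMaxIndep G t → s.ncard = t.ncard

/-- `V1, V2` form a bipartition of the graph `G`. -/
def IsBipartition (G : SimpleGraph V) (V1 V2 : Set V) : Prop :=
  Disjoint V1 V2 ∧ V1 ∪ V2 = Set.univ ∧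
    ∀ ⦃a b⦄, G.Adj a b → (a ∈ V1 ∧ b ∈ V2) ∨ (a ∈ V2 ∧ b ∈ V1)

/-- `G` has no isolated vertices. -/
def NoIsolated (G : SimpleGraph V) : Prop := ∀ v, ∃ w, G.Adj v w

/-- The edges `{x i, y i}` form a perfect matching of `G`. -/
def PMatch (G : SimpleGraph V) (n : ℕ) (x y : Fin n → V) : Prop :=
  Function.Injective x ∧ Function.Injective y ∧ (∀ i j, x i ≠ y j) ∧
    (∀ v, (∃ i, v = x i) ∨ (∃ i, v = y i)) ∧ ∀ i, G.Adj (x i) (y i)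

/-- Condition 1: for each `i` the induced subgraph on `N(x i) ∪ N(y i)` is complete
bipartite, i.e. every vertex of `N(y i)` is adjacent to every vertex of `N(x i)`. -/
def Cond1 (G : SimpleGraph V) (n : ℕ) (x y : Fin n → V) : Prop :=
  ∀ i, ∀ a ∈ G.neighborSet (y i), ∀ b ∈ G.neighborSet (x i), G.Adj a b

/-- Condition 2: for `i ≠ j`, not both `x i ~ y j` and `x j ~ y i`. -/
def Cond2 (G : SimpleGraph V) (n : ℕ) (x y : Fin n → V) : Prop :=
  ∀ i j, i ≠ j → G.Adj (x i) (y j) → ¬ G.Adj (x j) (y i)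

/-- Characterization of when `x i + x j` is a zero-divisor modulo an ideal generated
by squarefree quadratic monomials. -/
theorem stmt7 {K : Type*} [Field K] {n : ℕ} (I : Ideal (MvPolynomial (Fin n) K))
    (hgen : ∃ S : Set (MvPolynomial (Fin n) K), I = Ideal.span S ∧
      ∀ f ∈ S, ∃ a b : Fin n, a ≠ b ∧ f = X a * X b)
    (i j : Fin n) (hij : i < j)
    (hi2 : (X i : MvPolynomial (Fin n) K) ^ 2 ∉ I)
    (hj2 : (X j : MvPolynomial (Fin n) K) ^ 2 ∉ I) :
    (∃ s : MvPolynomial (Fin n) K ⧸ I, s ≠ 0 ∧ Ideal.Quotient.mk I (X i + X j) * s = 0) ↔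
      ((∃ k : Fin n, k ≠ i ∧ k ≠ j ∧ X k * X i ∈ I ∧ X k * X j ∈ I) ∨
       (∃ k l : Fin n, k < l ∧ k ≠ i ∧ k ≠ j ∧ l ≠ i ∧ l ≠ j ∧
          X k * X l ∉ I ∧ X k * X l * X i ∈ I ∧ X k * X l * X j ∈ I)) := by 
  classical
  obtain ⟨S, hIS, hS⟩ := hgen
  clear hi2 hj2
  have hXX : ∀ a b : Fin n, (X a * X b : MvPolynomial (Fin n) K)
      = monomial (Finsupp.single a 1 + Finsupp.single b 1) 1 := by
    intro a b
    rw [X, X, monomial_mul, one_mul]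
  have hXXX : ∀ a b c : Fin n, (X a * X b * X c : MvPolynomial (Fin n) K)
      = monomial (Finsupp.single a 1 + Finsupp.single b 1 + Finsupp.single c 1) 1 := by
    intro a b c
    rw [hXX, X, monomial_mul, one_mul]
  set E : Set (Fin n →₀ ℕ) :=
    {d | (monomial d (1:K)) ∈ S ∧ ∃ a b : Fin n, a ≠ b ∧
      d = Finsupp.single a 1 + Finsupp.single b 1} with hE
  have hSE : S = (fun d => monomial d (1:K)) '' E := by
    ext f
    constructor
    · intro hf
      obtain ⟨a, b, hab, rfl⟩ := hS f hf
      exact ⟨_, ⟨by rwa [← hXX], a, b, hab, rfl⟩, (hXX a b).symm⟩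
    · rintro ⟨d, ⟨hd, -⟩, rfl⟩
      exact hd
  set Div : (Fin n →₀ ℕ) → Prop := fun m => ∃ d ∈ E, d ≤ m with hDiv
  have hmem : ∀ p : MvPolynomial (Fin n) K, p ∈ I ↔ ∀ m ∈ p.support, Div m := by
    intro p
    rw [hIS, hSE]
    exact mem_ideal_span_monomial_image
  have hmono : ∀ {d m : Fin n →₀ ℕ}, Div d → d ≤ m → Div m := by
    rintro d m ⟨e, he, hed⟩ hdm; exact ⟨e, he, hed.trans hdm⟩
  have hDchar : ∀ m : Fin n →₀ ℕ, Div m ↔ ∃ a b : Fin n, a ≠ b ∧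
      (Finsupp.single a 1 + Finsupp.single b 1) ∈ E ∧ 1 ≤ m a ∧ 1 ≤ m b := by
    intro m
    constructor
    · rintro ⟨d, hdE, hdm⟩
      obtain ⟨-, a, b, hab, rfl⟩ := id hdE
      refine ⟨a, b, hab, hdE, ?_, ?_⟩
      · have := Finsupp.le_def.mp hdm a
        simpa [Finsupp.single_apply, hab.symm] using this
      · have := Finsupp.le_def.mp hdm b
        simpa [Finsupp.single_apply, hab] using this
    · rintro ⟨a, b, hab, hE', ha, hb⟩
      refine ⟨_, hE', Finsupp.le_def.mpr ?_⟩
      intro c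
      simp only [Finsupp.add_apply, Finsupp.single_apply]
      by_cases h1 : a = c
      · by_cases h2 : b = c
        · exact absurd (h1.trans h2.symm) hab
        · subst h1; simp [h2, ha]
      · by_cases h2 : b = c
        · subst h2; simp [h1, hb]
        · simp [h1, h2]
  have hmonoMem : ∀ (m : Fin n →₀ ℕ), (monomial m (1:K)) ∈ I ↔ Div m := by
    intro m
    rw [hmem]
    simp [support_monomial]
  have hXXmem : ∀ a b : Fin n, (X a * X b : MvPolynomial (Fin n) K) ∈ I ↔
      Div (Finsupp.single a 1 + Finsupp.single b 1) := by
    intro a b; rw [hXX, hmonoMem]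
  have hXXXmem : ∀ a b c : Fin n, (X a * X b * X c : MvPolynomial (Fin n) K) ∈ I ↔
      Div (Finsupp.single a 1 + Finsupp.single b 1 + Finsupp.single c 1) := by
    intro a b c; rw [hXXX, hmonoMem]
  constructor
  · rintro ⟨s, hs0, hmul⟩
    obtain ⟨p, rfl⟩ := Ideal.Quotient.mk_surjective s
    have hp : p ∉ I := fun h => hs0 (Ideal.Quotient.eq_zero_iff_mem.mpr h)
    rw [← map_mul, Ideal.Quotient.eq_zero_iff_mem] at hmul
    have hprod : ∀ m, coeff m ((X i + X j) * p) ≠ 0 → Div m := by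
      intro m hm
      exact (hmem _).mp hmul m (mem_support_iff.mpr hm)
    have hAex : ∃ m ∈ p.support, ¬ Div m := by
      by_contra h; push_neg at h; exact hp ((hmem p).mpr h)
    set A := p.support.filter (fun m => ¬ Div m) with hAdef
    have hAne : A.Nonempty := by
      obtain ⟨m, h1, h2⟩ := hAex; exact ⟨m, Finset.mem_filter.mpr ⟨h1, h2⟩⟩
    obtain ⟨m, hmA, hmax⟩ := A.exists_max_image (fun m => m i) hAne
    obtain ⟨hm, hnd⟩ := Finset.mem_filter.mp hmA
    have hcm : coeff m p ≠ 0 := mem_support_iff.mp hm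
    -- Step 1 : Div (eᵢ + m)
    have hDi : Div (Finsupp.single i 1 + m) := by
      by_contra hni
      have h0 : coeff (Finsupp.single i 1 + m) ((X i + X j) * p) = 0 := by
        by_contra hc; exact hni (hprod _ hc)
      rw [add_mul, coeff_add, coeff_X_mul, coeff_X_mul'] at h0
      by_cases hj : m j = 0
      · have hns : j ∉ (Finsupp.single i 1 + m).support := by
          simp [Finsupp.mem_support_iff, Finsupp.add_apply, Finsupp.single_apply,
            hij.ne, hij.ne', hj]
        rw [if_neg hns, add_zero] at h0
        exact hcm h0
      · have hjs : j ∈ (Finsupp.single i 1 + m).support := by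
          simp [Finsupp.mem_support_iff, Finsupp.add_apply, Finsupp.single_apply,
            hij.ne, hij.ne', hj]
        rw [if_pos hjs] at h0
        set m2 := Finsupp.single i 1 + m - Finsupp.single j 1 with hm2
        have hcm2 : coeff m2 p ≠ 0 := by
          intro h; rw [h, add_zero] at h0; exact hcm h0
        have hm2i : m2 i = m i + 1 := by
          simp [hm2, Finsupp.tsub_apply, Finsupp.add_apply, Finsupp.single_apply,
            hij.ne, hij.ne']
          omega
        have hnd2 : ¬ Div m2 := fun hd => hni (hmono hd tsub_le_self)
        have hA2 : m2 ∈ A := Finset.mem_filter.mpr ⟨mem_support_iff.mpr hcm2, hnd2⟩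
        have := hmax m2 hA2
        omega
    -- Step 2 : m i = 0
    have hmi : m i = 0 := by
      by_contra h
      apply hnd
      obtain ⟨a, b, hab, hEab, ha, hb⟩ := (hDchar _).mp hDi
      refine (hDchar m).mpr ⟨a, b, hab, hEab, ?_, ?_⟩
      · rcases eq_or_ne a i with rfl | hai
        · omega
        · simpa [Finsupp.add_apply, Finsupp.single_apply, Ne.symm hai] using ha
      · rcases eq_or_ne b i with rfl | hbi
        · omega
        · simpa [Finsupp.add_apply, Finsupp.single_apply, Ne.symm hbi] using hb
    -- Step 3 : Div (eⱼ + m)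
    have hDj : Div (Finsupp.single j 1 + m) := by
      apply hprod
      rw [add_mul, coeff_add, coeff_X_mul, coeff_X_mul']
      have hns : i ∉ (Finsupp.single j 1 + m).support := by
        simp [Finsupp.mem_support_iff, Finsupp.add_apply, Finsupp.single_apply,
          hij.ne, hij.ne', hmi]
      rw [if_neg hns, zero_add]
      exact hcm
    -- Step 4 : m j = 0
    have hmj : m j = 0 := by
      by_contra h
      apply hnd
      obtain ⟨a, b, hab, hEab, ha, hb⟩ := (hDchar _).mp hDj
      refine (hDchar m).mpr ⟨a, b, hab, hEab, ?_, ?_⟩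
      · rcases eq_or_ne a j with rfl | haj
        · omega
        · simpa [Finsupp.add_apply, Finsupp.single_apply, Ne.symm haj] using ha
      · rcases eq_or_ne b j with rfl | hbj
        · omega
        · simpa [Finsupp.add_apply, Finsupp.single_apply, Ne.symm hbj] using hb
    -- Step 5 : extract neighbours
    have hk : ∃ k, k ≠ i ∧ 1 ≤ m k ∧ Div (Finsupp.single k 1 + Finsupp.single i 1) := by
      obtain ⟨a, b, hab, hEab, ha, hb⟩ := (hDchar _).mp hDi
      have ha' : a = i ∨ 1 ≤ m a := by
        rcases eq_or_ne a i with rfl | hai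
        · exact Or.inl rfl
        · right; simpa [Finsupp.add_apply, Finsupp.single_apply, Ne.symm hai] using ha
      have hb' : b = i ∨ 1 ≤ m b := by
        rcases eq_or_ne b i with rfl | hbi
        · exact Or.inl rfl
        · right; simpa [Finsupp.add_apply, Finsupp.single_apply, Ne.symm hbi] using hb
      rcases ha' with rfl | ha1
      · rcases hb' with rfl | hb1
        · exact absurd rfl hab
        · exact ⟨b, Ne.symm hab, hb1, ⟨_, hEab, le_of_eq (add_comm _ _)⟩⟩
      · rcases hb' with rfl | hb1
        · exact ⟨a, hab, ha1, ⟨_, hEab, le_refl _⟩⟩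
        · exact absurd ((hDchar m).mpr ⟨a, b, hab, hEab, ha1, hb1⟩) hnd
    have hl : ∃ l, l ≠ j ∧ 1 ≤ m l ∧ Div (Finsupp.single l 1 + Finsupp.single j 1) := by
      obtain ⟨a, b, hab, hEab, ha, hb⟩ := (hDchar _).mp hDj
      have ha' : a = j ∨ 1 ≤ m a := by
        rcases eq_or_ne a j with rfl | haj
        · exact Or.inl rfl
        · right; simpa [Finsupp.add_apply, Finsupp.single_apply, Ne.symm haj] using ha
      have hb' : b = j ∨ 1 ≤ m b := by
        rcases eq_or_ne b j with rfl | hbj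
        · exact Or.inl rfl
        · right; simpa [Finsupp.add_apply, Finsupp.single_apply, Ne.symm hbj] using hb
      rcases ha' with rfl | ha1
      · rcases hb' with rfl | hb1
        · exact absurd rfl hab
        · exact ⟨b, Ne.symm hab, hb1, ⟨_, hEab, le_of_eq (add_comm _ _)⟩⟩
      · rcases hb' with rfl | hb1
        · exact ⟨a, hab, ha1, ⟨_, hEab, le_refl _⟩⟩
        · exact absurd ((hDchar m).mpr ⟨a, b, hab, hEab, ha1, hb1⟩) hnd
    obtain ⟨k, hki, hmk, hDki⟩ := hk
    obtain ⟨l, hlj, hml, hDlj⟩ := hl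
    have hkj : k ≠ j := by rintro rfl; omega
    have hli : l ≠ i := by rintro rfl; omega
    rcases eq_or_ne k l with rfl | hkl
    · exact Or.inl ⟨k, hki, hkj, (hXXmem k i).mpr hDki, (hXXmem k j).mpr hDlj⟩
    · right
      have hnkl : ¬ Div (Finsupp.single k 1 + Finsupp.single l 1) := by
        intro hd
        apply hnd
        obtain ⟨a, b, hab, hEab, ha, hb⟩ := (hDchar _).mp hd
        have key : ∀ c, 1 ≤ ((Finsupp.single k 1 + Finsupp.single l 1 : Fin n →₀ ℕ)) c → 1 ≤ m c := by
          intro c hc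
          rcases eq_or_ne c k with rfl | h1
          · exact hmk
          rcases eq_or_ne c l with rfl | h2
          · exact hml
          · simp [Finsupp.add_apply, Finsupp.single_apply, Ne.symm h1, Ne.symm h2] at hc
        exact (hDchar m).mpr ⟨a, b, hab, hEab, key a ha, key b hb⟩
      have hdi : Div (Finsupp.single k 1 + Finsupp.single l 1 + Finsupp.single i 1) := by
        refine hmono hDki (Finsupp.le_def.mpr fun c => ?_)
        simp only [Finsupp.add_apply]
        omega
      have hdj : Div (Finsupp.single k 1 + Finsupp.single l 1 + Finsupp.single j 1) := by
        refine hmono hDlj (Finsupp.le_def.mpr fun c => ?_)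
        simp only [Finsupp.add_apply]
        omega
      rcases lt_or_gt_of_ne hkl with h | h
      · exact ⟨k, l, h, hki, hkj, hli, hlj, fun hI => hnkl ((hXXmem k l).mp hI),
          (hXXXmem k l i).mpr hdi, (hXXXmem k l j).mpr hdj⟩
      · refine ⟨l, k, h, hli, hlj, hki, hkj, fun hI => hnkl ?_, ?_, ?_⟩
        · rw [add_comm]; exact (hXXmem l k).mp hI
        · rw [hXXXmem, add_comm (Finsupp.single l 1)]; exact hdi
        · rw [hXXXmem, add_comm (Finsupp.single l 1)]; exact hdj
  · rintro (⟨k, hki, hkj, h1, h2⟩ | ⟨k, l, hkl, hki, hkj, hli, hlj, h0, h1, h2⟩)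
    · refine ⟨Ideal.Quotient.mk I (X k), ?_, ?_⟩
      · rw [Ne, Ideal.Quotient.eq_zero_iff_mem]
        intro hXk
        have hd : Div (Finsupp.single k 1) := by
          rw [← hmonoMem]
          rwa [X] at hXk
        obtain ⟨a, b, hab, hEab, ha, hb⟩ := (hDchar _).mp hd
        have ha' : a = k := by
          by_contra h; simp [Finsupp.single_apply, Ne.symm h] at ha
        have hb' : b = k := by
          by_contra h; simp [Finsupp.single_apply, Ne.symm h] at hb
        exact hab (ha'.trans hb'.symm)
      · rw [← map_mul, Ideal.Quotient.eq_zero_iff_mem]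
        have heq : (X i + X j) * X k = (X k * X i + X k * X j : MvPolynomial (Fin n) K) := by ring
        rw [heq]
        exact I.add_mem h1 h2
    · refine ⟨Ideal.Quotient.mk I (X k * X l), ?_, ?_⟩
      · rw [Ne, Ideal.Quotient.eq_zero_iff_mem]
        exact h0
      · rw [← map_mul, Ideal.Quotient.eq_zero_iff_mem]
        have heq : (X i + X j) * (X k * X l) = (X k * X l * X i + X k * X l * X j : MvPolynomial (Fin n) K) := by ring
        rw [heq]
        exact I.add_mem h1 h2
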